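/- Let G be a simple graph on a vertex set V satisfying the extension property, and let M be the doubled graph of G on V × Bool. Suppose u₁, …, uₙ are distinct vertices in V × {0}, v₁, …, vₙ are distinct vertices in V × {0}, and the map sending uᵢ ↦ vᵢ and uᵢ' ↦ vᵢ' for i = 1, …, n is an isomorphism between the induced subgraphs of M on {u₁, …, uₙ, u₁', …, uₙ'} and on {v₁, …, vₙ, v₁', …, vₙ'}. Then for every u_{n+1} ∈ V × {0} with u_{n+1} ∉ {u₁, …, uₙ} there exists v_{n+1} ∈ V × {0} with v_{n+1} ∉ {v₁, …, vₙ} such that the extended map additionally sending u_{n+1} ↦ v_{n+1} and u_{n+1}' ↦ v_{n+1}' is again an isomorphism of induced subgraphs of M. -/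

import Mathlib

/-- The doubled graph of a simple graph `G` on `V`: its vertex set is `V × Bool`, and
`(a, i)` is adjacent to `(b, j)` iff either `i = j` and `a` is adjacent to `b` in `G`,
or `i ≠ j` and `a` is not adjacent to `b` in `G`. -/
def doubled {V : Type*} (G : SimpleGraph V) : SimpleGraph (V × Bool) where
  Adj u v := (u.2 = v.2 ∧ G.Adj u.1 v.1) ∨ (u.2 ≠ v.2 ∧ ¬ G.Adj u.1 v.1)
  symm := by
    constructor
    intro u v h
    rcases h with ⟨h1, h2⟩ | ⟨h1, h2⟩
    · exact Or.inl ⟨h1.symm, h2.symm⟩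
    · exact Or.inr ⟨h1.symm, fun h => h2 h.symm⟩
  loopless := by
    constructor
    intro u h
    rcases h with ⟨_, h2⟩ | ⟨h1, _⟩
    · exact G.ne_of_adj h2 rfl
    · exact h1 rfl

/-- For a vertex `u = (a, i)` of the doubled graph, `prime u` is the vertex `(a, ¬i)`. -/
def prime {V : Type*} (u : V × Bool) : V × Bool := (u.1, !u.2)

/-- A simple graph `G` on `V` has the extension property if for all finite disjoint sets
`A, B ⊆ V` there is a vertex `c ∉ A ∪ B` adjacent to every vertex of `A` and to no vertex
of `B`. -/
def ExtensionProperty {V : Type*} (G : SimpleGraph V) : Prop :=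
  ∀ A B : Finset V, Disjoint A B →
    ∃ c, c ∉ A ∧ c ∉ B ∧ (∀ a ∈ A, G.Adj c a) ∧ ∀ b ∈ B, ¬ G.Adj c b

lemma doubled_adj_congr {V : Type*} (G : SimpleGraph V) {x y x' y' : V}
    (h : G.Adj x y ↔ G.Adj x' y') (ε δ : Bool) :
    (doubled G).Adj (x, ε) (y, δ) ↔ (doubled G).Adj (x', ε) (y', δ) := by
  simp only [doubled]
  tauto

/-- Back-and-forth step: let `G` have the extension property and let `M` be the doubled graph.
If `u 0, …, u (n-1)` and `v 0, …, v (n-1)` are distinct vertices (listed by their first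
coordinates, all in `V × {0}`) such that the map `(u i, ε) ↦ (v i, ε)` is an isomorphism of
the corresponding induced subgraphs of `M`, then for every new vertex `un ∉ range u` there is
`vn ∉ range v` such that the extended map, additionally sending `(un, ε) ↦ (vn, ε)`, is again
an isomorphism of induced subgraphs of `M`. -/
theorem statement8 {V : Type*} (G : SimpleGraph V) (hG : ExtensionProperty G)
    (n : ℕ) (u v : Fin n → V) (hu : Function.Injective u) (hv : Function.Injective v)
    (hiso : ∀ (i j : Fin n) (ε δ : Bool),
      (doubled G).Adj (u i, ε) (u j, δ) ↔ (doubled G).Adj (v i, ε) (v j, δ))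
    (un : V) (hun : un ∉ Set.range u) :
    ∃ vn : V, vn ∉ Set.range v ∧
      ∀ (i j : Fin (n + 1)) (ε δ : Bool),
        (doubled G).Adj ((Fin.snoc u un : Fin (n + 1) → V) i, ε) ((Fin.snoc u un : Fin (n + 1) → V) j, δ) ↔
          (doubled G).Adj ((Fin.snoc v vn : Fin (n + 1) → V) i, ε) ((Fin.snoc v vn : Fin (n + 1) → V) j, δ) := by
  classical
  set A : Finset V := (Finset.univ.filter fun i => G.Adj un (u i)).image v with hA
  set B : Finset V := (Finset.univ.filter fun i => ¬ G.Adj un (u i)).image v with hB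
  have hdisj : Disjoint A B := by
    rw [Finset.disjoint_left]
    intro x hx hx'
    simp only [hA, hB, Finset.mem_image, Finset.mem_filter, Finset.mem_univ, true_and] at hx hx'
    obtain ⟨i, hi, hxi⟩ := hx
    obtain ⟨j, hj, hxj⟩ := hx'
    rw [← hxi] at hxj
    rw [hv hxj.symm] at hi
    exact hj hi
  obtain ⟨c, hc1, hc2, hc3, hc4⟩ := hG A B hdisj
  have hkey : ∀ i : Fin n, (G.Adj un (u i) ↔ G.Adj c (v i)) := by
    intro i
    by_cases h : G.Adj un (u i)
    · have : v i ∈ A := by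
        simp only [hA, Finset.mem_image, Finset.mem_filter, Finset.mem_univ, true_and]
        exact ⟨i, h, rfl⟩
      simp [h, hc3 _ this]
    · have : v i ∈ B := by
        simp only [hB, Finset.mem_image, Finset.mem_filter, Finset.mem_univ, true_and]
        exact ⟨i, h, rfl⟩
      simp [h, hc4 _ this]
  refine ⟨c, ?_, ?_⟩
  · rintro ⟨i, rfl⟩
    by_cases h : G.Adj un (u i)
    · apply hc1
      simp only [hA, Finset.mem_image, Finset.mem_filter, Finset.mem_univ, true_and]
      exact ⟨i, h, rfl⟩
    · apply hc2
      simp only [hB, Finset.mem_image, Finset.mem_filter, Finset.mem_univ, true_and]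
      exact ⟨i, h, rfl⟩
  · intro i j ε δ
    induction i using Fin.lastCases with
    | last =>
      induction j using Fin.lastCases with
      | last =>
        simp only [Fin.snoc_last]
        exact doubled_adj_congr G (by simp) ε δ
      | cast j' =>
        simp only [Fin.snoc_last, Fin.snoc_castSucc]
        exact doubled_adj_congr G (hkey j') ε δ
    | cast i' =>
      induction j using Fin.lastCases with
      | last =>
        simp only [Fin.snoc_last, Fin.snoc_castSucc]
        exact doubled_adj_congr G (by rw [G.adj_comm, G.adj_comm (v i')]; exact hkey i') ε δ
      | cast j' =>
        simp only [Fin.snoc_castSucc]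
        exact hiso i' j' ε δ
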